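/- Let X = {1/n : n ∈ ℕ, n ≥ 1} ⊆ ℝ and θ ∈ (0,1). Then the upper θ-intermediate dimension of X equals θ/(1+θ). -/

import Mathlib

open Set Metric

noncomputable section

/-- `coversWith X r n` : `X` can be covered by `n` sets each of diameter at most `r`. -/
def coversWith {α : Type*} [PseudoMetricSpace α] (X : Set α) (r : ℝ) (n : ℕ) : Prop :=
  ∃ B : Fin n → Set α, (∀ i, EMetric.diam (B i) ≤ ENNReal.ofReal r) ∧ X ⊆ ⋃ i, B i

/-- The covering number `N_r(X)`: the minimal number of sets of diameter at most `r`
needed to cover `X`. -/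
noncomputable def coverNum {α : Type*} [PseudoMetricSpace α] (X : Set α) (r : ℝ) : ℕ :=
  sInf {n : ℕ | coversWith X r n}

/-- Upper box dimension: infimum of `s ≥ 0` such that `N_r(X) ≤ C r^{-s}` for all `r ∈ (0,1)`. -/
noncomputable def upperBoxDim {α : Type*} [PseudoMetricSpace α] (X : Set α) : ℝ :=
  sInf {s : ℝ | 0 ≤ s ∧ ∃ C > (0:ℝ), ∀ r ∈ Ioo (0:ℝ) 1,
    (coverNum X r : ℝ) ≤ C * r ^ (-s)}

/-- Assouad dimension (localisation at arbitrary centres `x`). -/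
noncomputable def assouadDim {α : Type*} [PseudoMetricSpace α] (X : Set α) : ℝ :=
  sInf {s : ℝ | 0 ≤ s ∧ ∃ C > (0:ℝ), ∀ R > (0:ℝ), ∀ r ∈ Ioo (0:ℝ) R, ∀ x : α,
    (coverNum (X ∩ closedBall x R) r : ℝ) ≤ C * (R / r) ^ s}

/-- Assouad dimension (localisation at centres `x ∈ X`). -/
noncomputable def assouadDimOn {α : Type*} [PseudoMetricSpace α] (X : Set α) : ℝ :=
  sInf {s : ℝ | 0 ≤ s ∧ ∃ C > (0:ℝ), ∀ R > (0:ℝ), ∀ r ∈ Ioo (0:ℝ) R, ∀ x ∈ X,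
    (coverNum (X ∩ closedBall x R) r : ℝ) ≤ C * (R / r) ^ s}

/-- Upper θ-intermediate dimension, for `θ ∈ (0,1]`: infimum of `s ≥ 0` such that for all
`ε > 0` and all sufficiently small `δ ∈ (0,1)` there is a cover of `X` with all diameters in
`[δ^(1/θ), δ]` and `s`-cost less than `ε`. -/
noncomputable def interDim {α : Type*} [PseudoMetricSpace α] (θ : ℝ) (X : Set α) : ℝ :=
  sInf {s : ℝ | 0 ≤ s ∧ ∀ ε > (0:ℝ), ∃ δ₀ ∈ Ioo (0:ℝ) 1, ∀ δ ∈ Ioo (0:ℝ) δ₀,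
    ∃ n, ∃ B : Fin n → Set α, X ⊆ (⋃ i, B i) ∧
      (∀ i, Metric.diam (B i) ∈ Icc (δ ^ (1/θ)) δ) ∧
      ∑ i, Metric.diam (B i) ^ s < ε}

/-- Assouad spectrum at `θ` (localisation at arbitrary centres `x`). -/
noncomputable def assouadSpec {α : Type*} [PseudoMetricSpace α] (θ : ℝ) (X : Set α) : ℝ :=
  sInf {s : ℝ | 0 ≤ s ∧ ∃ C > (0:ℝ), ∀ r ∈ Ioo (0:ℝ) 1, ∀ x : α,
    (coverNum (X ∩ closedBall x (r ^ θ)) r : ℝ) ≤ C * (r ^ θ / r) ^ s}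

/-- Assouad spectrum at `θ` (localisation at centres `x ∈ X`). -/
noncomputable def assouadSpecOn {α : Type*} [PseudoMetricSpace α] (θ : ℝ) (X : Set α) : ℝ :=
  sInf {s : ℝ | 0 ≤ s ∧ ∃ C > (0:ℝ), ∀ r ∈ Ioo (0:ℝ) 1, ∀ x ∈ X,
    (coverNum (X ∩ closedBall x (r ^ θ)) r : ℝ) ≤ C * (r ^ θ / r) ^ s}

/-- The set `X = {1/n : n ∈ ℕ, n ≥ 1} ⊆ ℝ`. -/
def recipSet : Set ℝ := {x : ℝ | ∃ n : ℕ, 1 ≤ n ∧ x = 1 / (n : ℝ)}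

end
open Bornology
lemma counting (n m : ℕ) (B : Fin m → Set ℝ)
    (hcov : recipSet ⊆ ⋃ i, B i) (hb : ∀ i, IsBounded (B i)) :
    (n : ℝ) ≤ ∑ i, (4 * (n:ℝ)^2 * Metric.diam (B i) + 1) := by
  have h1 : (1:ℝ) ∈ recipSet := ⟨1, le_refl 1, by norm_num⟩
  have hm : Nonempty (Fin m) := by
    rcases mem_iUnion.mp (hcov h1) with ⟨i, -⟩
    exact ⟨i⟩
  classical
  set f : ℕ → Fin m := fun k =>
    if h : ∃ i, (1/(k:ℝ)) ∈ B i then h.choose else Classical.arbitrary _ with hfdef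
  have hf : ∀ k : ℕ, 1 ≤ k → (1/(k:ℝ)) ∈ B (f k) := by
    intro k hk
    have hx : (1/(k:ℝ)) ∈ recipSet := ⟨k, hk, rfl⟩
    have h : ∃ i, (1/(k:ℝ)) ∈ B i := mem_iUnion.mp (hcov hx)
    simp only [hfdef, dif_pos h]
    exact h.choose_spec
  set F : Finset ℕ := Finset.Icc (n+1) (2*n) with hF
  have hcard : F.card = n := by
    rw [hF, Nat.card_Icc]; omega
  have hsplit : F.card = ∑ i : Fin m, (F.filter (fun k => f k = i)).card :=
    Finset.card_eq_sum_card_fiberwise (fun x _ => Finset.mem_univ (f x))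
  have key : ∀ i : Fin m,
      ((F.filter (fun k => f k = i)).card : ℝ) ≤ 4 * (n:ℝ)^2 * Metric.diam (B i) + 1 := by
    intro i
    set G := F.filter (fun k => f k = i) with hG
    rcases G.eq_empty_or_nonempty with he | hne
    · rw [he]
      simp only [Finset.card_empty, Nat.cast_zero]
      have := Metric.diam_nonneg (s := B i)
      positivity
    · set k0 := G.min' hne with hk0
      set k1 := G.max' hne with hk1
      have hk0G : k0 ∈ G := G.min'_mem hne
      have hk1G : k1 ∈ G := G.max'_mem hne
      have hk01 : k0 ≤ k1 := G.min'_le _ hk1G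
      have hsub : G ⊆ Finset.Icc k0 k1 := by
        intro x hx
        exact Finset.mem_Icc.mpr ⟨G.min'_le _ hx, G.le_max' _ hx⟩
      have hcardG : G.card ≤ k1 - k0 + 1 := by
        have := Finset.card_le_card hsub
        rwa [Nat.card_Icc, Nat.succ_sub hk01] at this
      -- facts about k0 k1
      have hk0F : k0 ∈ F := Finset.mem_of_mem_filter _ hk0G
      have hk1F : k1 ∈ F := Finset.mem_of_mem_filter _ hk1G
      have hk0b := Finset.mem_Icc.mp hk0F
      have hk1b := Finset.mem_Icc.mp hk1F
      have hfk0 : f k0 = i := (Finset.mem_filter.mp hk0G).2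
      have hfk1 : f k1 = i := (Finset.mem_filter.mp hk1G).2
      have hmem0 : (1/(k0:ℝ)) ∈ B i := hfk0 ▸ hf k0 (by omega)
      have hmem1 : (1/(k1:ℝ)) ∈ B i := hfk1 ▸ hf k1 (by omega)
      have hdist : dist (1/(k0:ℝ)) (1/(k1:ℝ)) ≤ Metric.diam (B i) :=
        Metric.dist_le_diam_of_mem (hb i) hmem0 hmem1
      have hk0pos : (0:ℝ) < k0 := by exact_mod_cast Nat.lt_of_lt_of_le (by omega) hk0b.1
      have hk1pos : (0:ℝ) < k1 := by exact_mod_cast Nat.lt_of_lt_of_le (by omega) hk1b.1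
      have hk01' : (k0:ℝ) ≤ k1 := by exact_mod_cast hk01
      have hdeq : dist (1/(k0:ℝ)) (1/(k1:ℝ)) = ((k1:ℝ) - k0)/((k0:ℝ)*k1) := by
        rw [Real.dist_eq, abs_of_nonneg]
        · field_simp
        · have : (1:ℝ)/k1 ≤ 1/k0 := one_div_le_one_div_of_le hk0pos hk01'
          linarith
      have hprod : (k0:ℝ)*k1 ≤ 4*(n:ℝ)^2 := by
        have h0 : (k0:ℝ) ≤ 2*n := by exact_mod_cast hk0b.2
        have h1 : (k1:ℝ) ≤ 2*n := by exact_mod_cast hk1b.2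
        nlinarith
      have hn2pos : (0:ℝ) < 4*(n:ℝ)^2 := by nlinarith [hk0pos, hprod]
      have hgap : ((k1:ℝ) - k0) ≤ 4*(n:ℝ)^2 * Metric.diam (B i) := by
        have hstep : ((k1:ℝ) - k0)/(4*(n:ℝ)^2) ≤ ((k1:ℝ) - k0)/((k0:ℝ)*k1) :=
          div_le_div_of_nonneg_left (by linarith) (by positivity) hprod
        rw [hdeq] at hdist
        rw [div_le_iff₀ hn2pos] at hstep
        calc ((k1:ℝ) - k0) ≤ ((k1:ℝ) - k0)/((k0:ℝ)*k1) * (4*(n:ℝ)^2) := hstep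
          _ ≤ Metric.diam (B i) * (4*(n:ℝ)^2) := by
              apply mul_le_mul_of_nonneg_right hdist (by positivity)
          _ = 4*(n:ℝ)^2 * Metric.diam (B i) := by ring
      calc (G.card : ℝ) ≤ ((k1 - k0 + 1 : ℕ) : ℝ) := by exact_mod_cast hcardG
        _ = (k1:ℝ) - k0 + 1 := by
            push_cast [Nat.cast_sub hk01]; ring
        _ ≤ 4*(n:ℝ)^2 * Metric.diam (B i) + 1 := by linarith
  calc (n:ℝ) = (F.card : ℝ) := by rw [hcard]
    _ = ∑ i : Fin m, ((F.filter (fun k => f k = i)).card : ℝ) := by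
        rw [hsplit]; push_cast; rfl
    _ ≤ ∑ i, (4 * (n:ℝ)^2 * Metric.diam (B i) + 1) := Finset.sum_le_sum (fun i _ => key i)

lemma lower_bd {θ s : ℝ} (hθ0 : 0 < θ) (hθ1 : θ < 1)
    (hs0 : 0 ≤ s)
    (hP : ∀ ε > (0:ℝ), ∃ δ₀ ∈ Ioo (0:ℝ) 1, ∀ δ ∈ Ioo (0:ℝ) δ₀,
      ∃ n, ∃ B : Fin n → Set ℝ, recipSet ⊆ (⋃ i, B i) ∧
        (∀ i, Metric.diam (B i) ∈ Icc (δ ^ (1/θ)) δ) ∧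
        ∑ i, Metric.diam (B i) ^ s < 1) :
    θ/(1+θ) ≤ s := by
  by_contra hcon
  push_neg at hcon
  have h1θ : (0:ℝ) < 1 + θ := by linarith
  have hT1 : θ/(1+θ) < 1 := (div_lt_one h1θ).mpr (by linarith)
  have hs1 : s < 1 := hcon.trans hT1
  set a : ℝ := (s/θ + 1 - s)/2 with hadef
  have hsθ0 : 0 ≤ s/θ := div_nonneg hs0 hθ0.le
  have ha : 0 < a := by rw [hadef]; linarith
  set e : ℝ := s/θ - a with hedef
  have hnum : s + s*θ - θ < 0 := by nlinarith [(lt_div_iff₀ h1θ).mp hcon]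
  have hfrac : s/θ + s - 1 < 0 := by
    have h : s/θ + s - 1 = (s + s*θ - θ)/θ := by field_simp
    rw [h]; exact div_neg_of_neg_of_pos hnum hθ0
  have he : e < 0 := by rw [hedef, hadef]; linarith
  obtain ⟨δ₀, ⟨hδ₀0, hδ₀1⟩, hcov⟩ := hP 1 one_pos
  set c : ℝ := (17:ℝ) ^ (1/e) with hcdef
  have hc0 : 0 < c := Real.rpow_pos_of_pos (by norm_num) _
  set δ : ℝ := min (δ₀/2) c with hδdef
  have hδ0 : 0 < δ := lt_min (by linarith) hc0
  have hδδ₀ : δ < δ₀ := lt_of_le_of_lt (min_le_left _ _) (by linarith)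
  have hδ1 : δ < 1 := hδδ₀.trans hδ₀1
  have hδc : δ ≤ c := min_le_right _ _
  obtain ⟨m, B, hcovB, hdiam, hsum⟩ := hcov δ ⟨hδ0, hδδ₀⟩
  have hpow_pos : ∀ t : ℝ, (0:ℝ) < δ ^ t := fun t => Real.rpow_pos_of_pos hδ0 t
  have hb : ∀ i, IsBounded (B i) := by
    intro i
    by_contra hub
    have h0 := Metric.diam_eq_zero_of_unbounded hub
    have h1 := (hdiam i).1
    have h2 := hpow_pos (1/θ)
    rw [h0] at h1
    linarith
  set n : ℕ := ⌈δ ^ (-a)⌉₊ with hndef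
  have hn1 : 1 < δ ^ (-a) := Real.one_lt_rpow_of_pos_of_lt_one_of_neg hδ0 hδ1 (by linarith)
  have hnlow : δ ^ (-a) ≤ (n:ℝ) := Nat.le_ceil _
  have hnup : (n:ℝ) ≤ 2 * δ ^ (-a) := by
    have h := Nat.ceil_lt_add_one (le_of_lt (Real.rpow_pos_of_pos hδ0 (-a)))
    rw [← hndef] at h
    linarith
  have hcount := counting n m B hcovB hb
  set A : ℝ := 4*(n:ℝ)^2 * δ ^ (1-s) + δ ^ (-(s/θ)) with hAdef
  have hA0 : 0 < A := by
    have := hpow_pos (1-s)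
    have := hpow_pos (-(s/θ))
    positivity
  have perterm : ∀ i, 4*(n:ℝ)^2 * Metric.diam (B i) + 1 ≤ A * Metric.diam (B i) ^ s := by
    intro i
    set d : ℝ := Metric.diam (B i) with hddef
    have hd0 : 0 < d := lt_of_lt_of_le (hpow_pos (1/θ)) (hdiam i).1
    have hdδ : d ≤ δ := (hdiam i).2
    have hds : δ ^ (s/θ) ≤ d ^ s := by
      have h1 : (δ ^ (1/θ)) ^ s ≤ d ^ s :=
        Real.rpow_le_rpow (hpow_pos (1/θ)).le (hdiam i).1 hs0
      rw [← Real.rpow_mul hδ0.le] at h1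
      have h2 : (1/θ)*s = s/θ := by ring
      rwa [h2] at h1
    have h1le : 1 ≤ δ ^ (-(s/θ)) * d ^ s := by
      have h := mul_le_mul_of_nonneg_left hds (hpow_pos (-(s/θ))).le
      rwa [← Real.rpow_add hδ0, neg_add_cancel, Real.rpow_zero] at h
    have hdle : d ≤ δ ^ (1-s) * d ^ s := by
      have hsplit : d = d ^ (1-s) * d ^ s := by
        rw [← Real.rpow_add hd0]
        norm_num
      have h2 : d ^ (1-s) ≤ δ ^ (1-s) :=
        Real.rpow_le_rpow hd0.le hdδ (by linarith)
      calc d = d ^ (1-s) * d ^ s := hsplit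
        _ ≤ δ ^ (1-s) * d ^ s :=
          mul_le_mul_of_nonneg_right h2 (Real.rpow_nonneg hd0.le _)
    have hn2 : (0:ℝ) ≤ 4*(n:ℝ)^2 := by positivity
    calc 4*(n:ℝ)^2 * d + 1 ≤ 4*(n:ℝ)^2 * (δ ^ (1-s) * d ^ s) + δ ^ (-(s/θ)) * d ^ s := by
          have := mul_le_mul_of_nonneg_left hdle hn2
          linarith
      _ = A * d ^ s := by rw [hAdef]; ring
  have hnA : (n:ℝ) < A := by
    calc (n:ℝ) ≤ ∑ i, (4*(n:ℝ)^2 * Metric.diam (B i) + 1) := hcount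
      _ ≤ ∑ i, A * Metric.diam (B i) ^ s := Finset.sum_le_sum (fun i _ => perterm i)
      _ = A * ∑ i, Metric.diam (B i) ^ s := by rw [Finset.mul_sum]
      _ < A * 1 := mul_lt_mul_of_pos_left hsum hA0
      _ = A := mul_one A
  have hA17 : A ≤ 17 * δ ^ (-(s/θ)) := by
    have hsq : 4*(n:ℝ)^2 ≤ 16 * (δ ^ (-a) * δ ^ (-a)) := by nlinarith
    have hee : δ ^ (-a) * δ ^ (-a) * δ ^ (1-s) = δ ^ (-(s/θ)) := by
      rw [← Real.rpow_add hδ0, ← Real.rpow_add hδ0]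
      congr 1
      rw [hadef]; ring
    have h2 : 4*(n:ℝ)^2 * δ ^ (1-s) ≤ 16 * δ ^ (-(s/θ)) := by
      calc 4*(n:ℝ)^2 * δ ^ (1-s) ≤ 16 * (δ ^ (-a) * δ ^ (-a)) * δ ^ (1-s) :=
            mul_le_mul_of_nonneg_right hsq (hpow_pos _).le
        _ = 16 * δ ^ (-(s/θ)) := by rw [mul_assoc, hee]
    rw [hAdef]; linarith
  -- so δ ^ (-a) < 17 * δ ^ (-(s/θ)), i.e. δ ^ e < 17
  have hlt : δ ^ e < 17 := by
    have h1 : δ ^ (-a) < 17 * δ ^ (-(s/θ)) := lt_of_le_of_lt hnlow (hnA.trans_le hA17)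
    have h2 := mul_lt_mul_of_pos_right h1 (hpow_pos (s/θ))
    rw [← Real.rpow_add hδ0] at h2
    rw [mul_assoc, ← Real.rpow_add hδ0, neg_add_cancel, Real.rpow_zero, mul_one] at h2
    have h3 : -a + s/θ = e := by rw [hedef]; ring
    rwa [h3] at h2
  have hge : (17:ℝ) ≤ δ ^ e := by
    have h1 : δ ^ (-e) ≤ c ^ (-e) := Real.rpow_le_rpow hδ0.le hδc (by linarith)
    have h2 : c ^ (-e) = 1/17 := by
      rw [hcdef, ← Real.rpow_mul (by norm_num : (0:ℝ) ≤ 17)]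
      have hene : e ≠ 0 := ne_of_lt he
      have h : (1/e)*(-e) = -1 := by field_simp
      rw [h, Real.rpow_neg_one]
      norm_num
    have hpe := hpow_pos e
    rw [h2, Real.rpow_neg hδ0.le, inv_eq_one_div] at h1
    exact (one_div_le_one_div hpe (by norm_num)).mp h1
  linarith

lemma cover_exists {θ s δ : ℝ} (hθ0 : 0 < θ) (hθ1 : θ < 1) (hs0 : 0 ≤ s)
    (hδ0 : 0 < δ) (hδ1 : δ < 1) :
    ∃ n, ∃ B : Fin n → Set ℝ, recipSet ⊆ (⋃ i, B i) ∧
      (∀ i, Metric.diam (B i) ∈ Icc (δ ^ (1/θ)) δ) ∧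
      ∑ i, Metric.diam (B i) ^ s ≤
        δ ^ (s/θ - 1/(1+θ)) + δ ^ (s/θ) + δ ^ (s - θ/(1+θ)) + δ ^ s := by
  have h1θ : (0:ℝ) < 1 + θ := by linarith
  set N : ℕ := ⌈δ ^ (-(1/(1+θ)))⌉₊ with hN
  set K : ℕ := ⌈δ ^ (-(θ/(1+θ)))⌉₊ with hK
  have hpow_pos : ∀ t : ℝ, (0:ℝ) < δ ^ t := fun t => Real.rpow_pos_of_pos hδ0 t
  have hδθpos : (0:ℝ) < δ ^ (1/θ) := hpow_pos _
  have hδθ : δ ^ (1/θ) ≤ δ := by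
    nth_rewrite 2 [← Real.rpow_one δ]
    exact Real.rpow_le_rpow_of_exponent_ge hδ0 hδ1.le (one_le_one_div hθ0 hθ1.le)
  set B1 : Fin N → Set ℝ := fun i => Icc (1/((i:ℕ)+1:ℝ)) (1/((i:ℕ)+1:ℝ) + δ ^ (1/θ)) with hB1
  set B2 : Fin K → Set ℝ := fun j => Icc (((j:ℕ):ℝ)*δ) (((j:ℕ):ℝ)*δ + δ) with hB2
  have d1 : ∀ i : Fin N, Metric.diam (B1 i) = δ ^ (1/θ) := by
    intro i
    rw [hB1]
    rw [Real.diam_Icc (by linarith)]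
    ring
  have d2 : ∀ j : Fin K, Metric.diam (B2 j) = δ := by
    intro j
    rw [hB2]
    rw [Real.diam_Icc (by linarith)]
    ring
  refine ⟨N + K, Fin.append B1 B2, ?_, ?_, ?_⟩
  · -- covering
    rintro x ⟨m, hm, rfl⟩
    rw [mem_iUnion]
    by_cases hmN : m ≤ N
    · have hm1 : m - 1 < N := by omega
      refine ⟨Fin.castAdd K ⟨m-1, hm1⟩, ?_⟩
      rw [Fin.append_left]
      have hcast : ((((⟨m-1, hm1⟩ : Fin N) : ℕ) : ℝ) + 1) = (m:ℝ) := by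
        have h : (m - 1 : ℕ) + 1 = m := by omega
        calc ((((⟨m-1, hm1⟩ : Fin N) : ℕ) : ℝ) + 1) = (((m-1 : ℕ) + 1 : ℕ) : ℝ) := by push_cast; ring
          _ = (m:ℝ) := by rw [h]
      simp only [hB1, hcast]
      exact ⟨le_refl _, by linarith [hδθpos.le]⟩
    · -- m > N
      have hmpos : (0:ℝ) < m := by
        have : (1:ℕ) ≤ m := hm
        exact_mod_cast Nat.lt_of_lt_of_le Nat.zero_lt_one this
      have hNm : δ ^ (-(1/(1+θ))) < (m:ℝ) := by
        calc δ ^ (-(1/(1+θ))) ≤ (N:ℝ) := Nat.le_ceil _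
          _ < m := by exact_mod_cast Nat.lt_of_not_le hmN
      have hinv : 1/(m:ℝ) < δ ^ (1/(1+θ)) := by
        have h := one_div_lt_one_div_of_lt (hpow_pos (-(1/(1+θ)))) hNm
        rw [Real.rpow_neg hδ0.le] at h
        simpa [one_div] using h
      set j : ℕ := ⌊(1/(m:ℝ))/δ⌋₊ with hj
      have hjK : j < K := by
        have h1 : (j:ℝ) ≤ (1/(m:ℝ))/δ := Nat.floor_le (by positivity)
        have h2 : (1/(m:ℝ))/δ < δ ^ (1/(1+θ)) / δ := by gcongr
        have h3 : δ ^ (1/(1+θ)) / δ = δ ^ (-(θ/(1+θ))) := by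
          have he : (-(θ/(1+θ))) = 1/(1+θ) - 1 := by field_simp; ring
          rw [he, Real.rpow_sub hδ0, Real.rpow_one]
        have h4 : (j:ℝ) < (K:ℝ) := by
          calc (j:ℝ) ≤ (1/(m:ℝ))/δ := h1
            _ < δ ^ (-(θ/(1+θ))) := by rw [← h3]; exact h2
            _ ≤ (K:ℝ) := Nat.le_ceil _
        exact_mod_cast h4
      refine ⟨Fin.natAdd N ⟨j, hjK⟩, ?_⟩
      rw [Fin.append_right]
      simp only [hB2]
      constructor
      · have h1 : (j:ℝ) ≤ (1/(m:ℝ))/δ := Nat.floor_le (by positivity)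
        calc ((j:ℕ):ℝ)*δ ≤ ((1/(m:ℝ))/δ)*δ := by gcongr
          _ = 1/(m:ℝ) := by field_simp
      · have h2 : (1/(m:ℝ))/δ < (j:ℝ) + 1 := Nat.lt_floor_add_one _
        have := (div_lt_iff₀ hδ0).mp h2
        linarith
  · -- diameters
    intro i
    refine Fin.addCases (fun i => ?_) (fun j => ?_) i
    · rw [Fin.append_left, d1]
      exact ⟨le_rfl, hδθ⟩
    · rw [Fin.append_right, d2]
      exact ⟨hδθ, le_rfl⟩
  · -- sum
    rw [Fin.sum_univ_add]
    have e1 : ∑ i : Fin N, Metric.diam (Fin.append B1 B2 (Fin.castAdd K i)) ^ s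
        = (N:ℝ) * δ ^ ((1/θ)*s) := by
      simp only [Fin.append_left, d1]
      rw [Finset.sum_const, Finset.card_univ, Fintype.card_fin, nsmul_eq_mul,
        ← Real.rpow_mul hδ0.le]
    have e2 : ∑ j : Fin K, Metric.diam (Fin.append B1 B2 (Fin.natAdd N j)) ^ s
        = (K:ℝ) * δ ^ s := by
      simp only [Fin.append_right, d2]
      rw [Finset.sum_const, Finset.card_univ, Fintype.card_fin, nsmul_eq_mul]
    rw [e1, e2]
    have hNle : (N:ℝ) ≤ δ ^ (-(1/(1+θ))) + 1 := (Nat.ceil_lt_add_one (hpow_pos _).le).le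
    have hKle : (K:ℝ) ≤ δ ^ (-(θ/(1+θ))) + 1 := (Nat.ceil_lt_add_one (hpow_pos _).le).le
    have hmul1 : δ ^ (-(1/(1+θ))) * δ ^ ((1/θ)*s) = δ ^ (s/θ - 1/(1+θ)) := by
      rw [← Real.rpow_add hδ0]; congr 1; ring
    have hmul2 : δ ^ (-(θ/(1+θ))) * δ ^ s = δ ^ (s - θ/(1+θ)) := by
      rw [← Real.rpow_add hδ0]; congr 1; ring
    have heq : δ ^ ((1/θ)*s) = δ ^ (s/θ) := by congr 1; ring
    calc (N:ℝ) * δ ^ ((1/θ)*s) + (K:ℝ) * δ ^ s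
        ≤ (δ ^ (-(1/(1+θ))) + 1) * δ ^ ((1/θ)*s) + (δ ^ (-(θ/(1+θ))) + 1) * δ ^ s := by
          gcongr <;> exact (hpow_pos _).le
      _ = δ ^ (s/θ - 1/(1+θ)) + δ ^ (s/θ) + (δ ^ (s - θ/(1+θ)) + δ ^ s) := by
          rw [add_mul, add_mul, one_mul, one_mul, hmul1, hmul2, heq]
      _ = δ ^ (s/θ - 1/(1+θ)) + δ ^ (s/θ) + δ ^ (s - θ/(1+θ)) + δ ^ s := by ring

lemma mem_S {θ : ℝ} (hθ0 : 0 < θ) (hθ1 : θ < 1) {s : ℝ} (hs : θ/(1+θ) < s) (hs1 : s < 1) :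
    0 ≤ s ∧ ∀ ε > (0:ℝ), ∃ δ₀ ∈ Ioo (0:ℝ) 1, ∀ δ ∈ Ioo (0:ℝ) δ₀,
      ∃ n, ∃ B : Fin n → Set ℝ, recipSet ⊆ (⋃ i, B i) ∧
        (∀ i, Metric.diam (B i) ∈ Icc (δ ^ (1/θ)) δ) ∧
        ∑ i, Metric.diam (B i) ^ s < ε := by
  have h1θ : (0:ℝ) < 1 + θ := by linarith
  have hT : (0:ℝ) < θ/(1+θ) := div_pos hθ0 h1θ
  have hs0 : (0:ℝ) < s := hT.trans hs
  have he2 : (0:ℝ) < s/θ := div_pos hs0 hθ0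
  have he3 : (0:ℝ) < s - θ/(1+θ) := by linarith
  have he1 : (0:ℝ) < s/θ - 1/(1+θ) := by
    have h : θ < s*(1+θ) := (div_lt_iff₀ h1θ).mp hs
    have h2 : 1/(1+θ) < s/θ := (div_lt_div_iff₀ h1θ hθ0).mpr (by linarith)
    linarith
  set c : ℝ := min (min (s/θ - 1/(1+θ)) (s/θ)) (min (s - θ/(1+θ)) s) with hcdef
  have hc : 0 < c := lt_min (lt_min he1 he2) (lt_min he3 hs0)
  refine ⟨hs0.le, fun ε hε => ?_⟩
  set η : ℝ := min (ε/4) (1/2) with hηdef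
  have hη0 : 0 < η := lt_min (by linarith) (by norm_num)
  have hη1 : η < 1 := lt_of_le_of_lt (min_le_right _ _) (by norm_num)
  refine ⟨η ^ (1/c), ⟨Real.rpow_pos_of_pos hη0 _,
    Real.rpow_lt_one hη0.le hη1 (by positivity)⟩, ?_⟩
  rintro δ ⟨hδ0, hδup⟩
  have hδ1 : δ < 1 := hδup.trans (Real.rpow_lt_one hη0.le hη1 (by positivity))
  obtain ⟨n, B, hcov, hdiam, hsum⟩ := cover_exists hθ0 hθ1 hs0.le hδ0 hδ1
  have key : ∀ t : ℝ, c ≤ t → δ ^ t < ε/4 := by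
    intro t ht
    have h1 : δ ^ t ≤ δ ^ c := Real.rpow_le_rpow_of_exponent_ge hδ0 hδ1.le ht
    have h2 : δ ^ c < (η ^ (1/c)) ^ c := Real.rpow_lt_rpow hδ0.le hδup hc
    have h3 : (η ^ (1/c)) ^ c = η := by
      rw [← Real.rpow_mul hη0.le, one_div, inv_mul_cancel₀ hc.ne', Real.rpow_one]
    have h4 : η ≤ ε/4 := min_le_left _ _
    linarith
  refine ⟨n, B, hcov, hdiam, ?_⟩
  have k1 := key _ (le_trans (min_le_left _ _) (min_le_left _ _))
  have k2 := key _ (le_trans (min_le_left _ _) (min_le_right _ _))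
  have k3 := key _ (le_trans (min_le_right _ _) (min_le_left _ _))
  have k4 := key _ (le_trans (min_le_right _ _) (min_le_right _ _))
  calc ∑ i, Metric.diam (B i) ^ s
      ≤ δ ^ (s/θ - 1/(1+θ)) + δ ^ (s/θ) + δ ^ (s - θ/(1+θ)) + δ ^ s := hsum
    _ < ε := by linarith

theorem stmt9 (θ : ℝ) (hθ : θ ∈ Ioo (0:ℝ) 1) :
    interDim θ recipSet = θ / (1 + θ) := by
  obtain ⟨hθ0, hθ1⟩ := hθ
  have h1θ : (0:ℝ) < 1 + θ := by linarith
  have hT0 : (0:ℝ) < θ/(1+θ) := div_pos hθ0 h1θ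
  have hT1 : θ/(1+θ) < 1 := (div_lt_one h1θ).mpr (by linarith)
  unfold interDim
  set S := {s : ℝ | 0 ≤ s ∧ ∀ ε > (0:ℝ), ∃ δ₀ ∈ Ioo (0:ℝ) 1, ∀ δ ∈ Ioo (0:ℝ) δ₀,
    ∃ n, ∃ B : Fin n → Set ℝ, recipSet ⊆ (⋃ i, B i) ∧
      (∀ i, Metric.diam (B i) ∈ Icc (δ ^ (1/θ)) δ) ∧
      ∑ i, Metric.diam (B i) ^ s < ε} with hSdef
  have hmemS : ∀ s : ℝ, θ/(1+θ) < s → s < 1 → s ∈ S := by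
    intro s h1 h2
    exact mem_S hθ0 hθ1 h1 h2
  have hlow : ∀ s ∈ S, θ/(1+θ) ≤ s := by
    rintro s ⟨hs0, hs⟩
    exact lower_bd hθ0 hθ1 hs0 (fun ε hε => hs 1 one_pos)
  have hne : S.Nonempty := ⟨(θ/(1+θ) + 1)/2, hmemS _ (by linarith) (by linarith)⟩
  have hbdd : BddBelow S := ⟨θ/(1+θ), fun s hs => hlow s hs⟩
  apply le_antisymm
  · apply le_of_forall_pos_le_add
    intro ε hε
    set s := θ/(1+θ) + min ε ((1 - θ/(1+θ))/2) with hsdef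
    have hmin0 : 0 < min ε ((1 - θ/(1+θ))/2) := lt_min hε (by linarith)
    have hs1 : s < 1 := by
      have := min_le_right ε ((1 - θ/(1+θ))/2)
      rw [hsdef]; linarith
    have hsS : s ∈ S := hmemS s (by rw [hsdef]; linarith) hs1
    calc sInf S ≤ s := csInf_le hbdd hsS
      _ ≤ θ/(1+θ) + ε := by
          have := min_le_left ε ((1 - θ/(1+θ))/2)
          rw [hsdef]; linarith
  · exact le_csInf hne hlow
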